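/- arXiv:funct-an/9301005 — 2 statements merged into one kernel-verified Lean document; each statement's English description precedes it below -/
import Mathlib

section
/- Let G, H be groups with commuting actions λ, σ on an abelian group U, and let u : G × H → U satisfy u(x₁x₂,h) = u(x₁,h)·λ_{x₁}(u(x₂,h)) and u(x,h₁h₂) = u(x,h₁)·σ_{h₁}(u(x,h₂)). Define U((x₀,h₀),(x₁,h₁)) = λ_{x₀}(u(x₁,h₀)) on (G×H) × (G×H). Then U satisfies the twisted-action cocycle identity: (λ,σ)_{(x₀,h₀)}(U((x₁,h₁),(x₂,h₂))) · U((x₀,h₀),(x₁x₂,h₁h₂)) = U((x₀x₁,h₀h₁),(x₂,h₂)) · U((x₀,h₀),(x₁,h₁)), where (λ,σ)_{(x,h)} = λ_x ∘ σ_h. -/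
/-- For a bi-cocycle `u : G × H → U` (with commuting actions `λ`, `σ` of `G`, `H`
on the abelian group `U`), the map `U((x₀,h₀),(x₁,h₁)) = λ_{x₀}(u(x₁,h₀))` satisfies
the twisted-action cocycle identity for the product action `(λ,σ)_{(x,h)} = λ_x ∘ σ_h`. -/
theorem stmt2 {G H U : Type*} [Group G] [Group H] [CommGroup U]
    (lam : G →* MulAut U) (sig : H →* MulAut U)
    (hcomm : ∀ (x : G) (h : H) (a : U), lam x (sig h a) = sig h (lam x a))
    (u : G → H → U)
    (hu1 : ∀ (x₁ x₂ : G) (h : H), u (x₁ * x₂) h = u x₁ h * lam x₁ (u x₂ h))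
    (hu2 : ∀ (x : G) (h₁ h₂ : H), u x (h₁ * h₂) = u x h₁ * sig h₁ (u x h₂)) :
    ∀ (x₀ x₁ x₂ : G) (h₀ h₁ h₂ : H),
      lam x₀ (sig h₀ (lam x₁ (u x₂ h₁))) * lam x₀ (u (x₁ * x₂) h₀) =
        lam (x₀ * x₁) (u x₂ (h₀ * h₁)) * lam x₀ (u x₁ h₀) := by
  intro x₀ x₁ x₂ h₀ h₁ h₂
  simp only [hu1, hu2, map_mul, MulAut.mul_apply, ← hcomm]
  simp only [mul_comm, mul_left_comm, mul_assoc]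
end

section
/- In the Heisenberg group H_c ≅ ℤ² ⋊_{α_c} ℤ with α_c(q)(m,p) = (m, p - cmq), the commutator subgroup [H_c, H_c] equals {(0, p, 0) : p ∈ cℤ} (identifying elements as triples (m,p,q)), and the abelianization H_c/[H_c,H_c] is isomorphic to ℤ² ⊕ ℤ/cℤ. -/
/-- The automorphism `α_c(q)(m,p) = (m, p - c·m·q)` of `ℤ²`. -/
def alphaC (c q : ℤ) : ℤ × ℤ ≃+ ℤ × ℤ where
  toFun v := (v.1, v.2 - c * v.1 * q)
  invFun v := (v.1, v.2 + c * v.1 * q)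
  left_inv v := by simp
  right_inv v := by simp
  map_add' v w := by simp [Prod.ext_iff]; ring

/-- `q ↦ α_c(q)` as a homomorphism into the automorphisms of `Multiplicative ℤ²`. -/
def phiC (c : ℤ) : Multiplicative ℤ →* MulAut (Multiplicative (ℤ × ℤ)) where
  toFun q := AddEquiv.toMultiplicative (alphaC c q.toAdd)
  map_one' := by
    ext v
    · simp [alphaC, AddEquiv.toMultiplicative]
    · show v.toAdd.2 - c * v.toAdd.1 * (Multiplicative.toAdd (1 : Multiplicative ℤ)) = v.toAdd.2
      simp
  map_mul' q q' := by
    ext v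
    · simp [alphaC, AddEquiv.toMultiplicative]
    · show v.toAdd.2 - c * v.toAdd.1 * (Multiplicative.toAdd (q * q')) = (v.toAdd.2 - c * v.toAdd.1 * q'.toAdd) - c * v.toAdd.1 * q.toAdd
      simp only [toAdd_mul]
      ring

/-- The discrete Heisenberg group `H_c = ℤ² ⋊_{α_c} ℤ` (with elements written as
triples `(m,p,q)`). -/
abbrev HeisC (c : ℤ) := Multiplicative (ℤ × ℤ) ⋊[phiC c] Multiplicative ℤ

lemma phiC_apply (c : ℤ) (q : Multiplicative ℤ) (v : Multiplicative (ℤ × ℤ)) :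
    Multiplicative.toAdd ((phiC c q) v) =
      (v.toAdd.1, v.toAdd.2 - c * v.toAdd.1 * q.toAdd) := rfl

def fC (c : ℕ) : HeisC c →* Multiplicative (ℤ × ℤ × ZMod c) where
  toFun g := Multiplicative.ofAdd (g.left.toAdd.1, g.right.toAdd, (g.left.toAdd.2 : ZMod c))
  map_one' := by
    simp
  map_mul' g h := by
    rw [← ofAdd_add, Equiv.apply_eq_iff_eq]
    simp only [SemidirectProduct.mul_left, SemidirectProduct.mul_right, toAdd_mul, phiC_apply,
      Prod.fst_add, Prod.snd_add, Prod.mk_add_mk, Prod.mk.injEq]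
    refine ⟨trivial, trivial, ?_⟩
    push_cast
    simp [ZMod.natCast_self]

lemma mem_ker_fC (c : ℕ) (g : HeisC c) :
    g ∈ (fC c).ker ↔
      g.right = 1 ∧ g.left.toAdd.1 = 0 ∧ (c : ℤ) ∣ g.left.toAdd.2 := by
  rw [MonoidHom.mem_ker]
  show Multiplicative.ofAdd ((g.left.toAdd.1, g.right.toAdd, (g.left.toAdd.2 : ZMod c)) : ℤ × ℤ × ZMod c) = 1 ↔ _
  rw [ofAdd_eq_one, Prod.ext_iff, Prod.ext_iff]
  constructor
  · rintro ⟨h1, h2, h3⟩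
    exact ⟨toAdd_eq_zero.mp (by simpa using h2), by simpa using h1,
      by exact_mod_cast (ZMod.intCast_zmod_eq_zero_iff_dvd _ c).mp (by simpa using h3)⟩
  · rintro ⟨hr, h1, k, hk⟩
    refine ⟨by simpa using h1, by simp [hr], ?_⟩
    show ((g.left.toAdd.2 : ℤ) : ZMod c) = 0
    rw [hk]
    push_cast
    simp [ZMod.natCast_self]

open scoped commutatorElement in
lemma comm_elt (c k : ℤ) :
    (⟨Multiplicative.ofAdd (0, c * k), 1⟩ : HeisC c) =
      ⁅(⟨1, Multiplicative.ofAdd 1⟩ : HeisC c), ⟨Multiplicative.ofAdd (-k, 0), 1⟩⁆ := by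
  have hext : ∀ a b : HeisC c, a.left.toAdd = b.left.toAdd → a.right = b.right → a = b := by
    intro a b h1 h2
    exact SemidirectProduct.ext (Multiplicative.toAdd.injective h1) h2
  refine (hext _ _ ?_ ?_).symm <;>
    simp [commutatorElement_def, SemidirectProduct.mul_left, SemidirectProduct.mul_right,
      SemidirectProduct.inv_left, SemidirectProduct.inv_right, phiC_apply, Prod.ext_iff]

lemma ker_eq_commutator (c : ℕ) : (fC c).ker = commutator (HeisC c) := by
  apply le_antisymm
  · intro g hg
    rw [mem_ker_fC] at hg
    obtain ⟨hr, h1, k, hk⟩ := hg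
    have : g = ⟨Multiplicative.ofAdd (0, (c : ℤ) * k), 1⟩ := by
      refine SemidirectProduct.ext ?_ hr
      refine Multiplicative.toAdd.injective ?_
      simp [Prod.ext_iff, h1, hk]
    rw [this, comm_elt]
    exact Subgroup.commutator_mem_commutator (Subgroup.mem_top _) (Subgroup.mem_top _)
  · exact Abelianization.commutator_subset_ker (fC c)

lemma fC_surj (c : ℕ) [NeZero c] : Function.Surjective (fC c) := by
  intro x
  refine ⟨⟨Multiplicative.ofAdd (x.toAdd.1, (x.toAdd.2.2.val : ℤ)), Multiplicative.ofAdd x.toAdd.2.1⟩, ?_⟩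
  show Multiplicative.ofAdd _ = x
  rw [← ofAdd_toAdd x, Equiv.apply_eq_iff_eq]
  simp [Prod.ext_iff, ZMod.natCast_val, ZMod.intCast_cast, ZMod.cast_id]


/-- In `H_c ≅ ℤ² ⋊_{α_c} ℤ`, the commutator subgroup is `{(0, p, 0) : p ∈ cℤ}`,
and the abelianization `H_c/[H_c,H_c]` is isomorphic to `ℤ² ⊕ ℤ/cℤ`. -/
theorem stmt15 (c : ℕ) (hc : 0 < c) :
    (∀ g : HeisC c, g ∈ commutator (HeisC c) ↔
        g.right = 1 ∧ g.left.toAdd.1 = 0 ∧ (c : ℤ) ∣ g.left.toAdd.2) ∧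
      Nonempty (Abelianization (HeisC c) ≃* Multiplicative (ℤ × ℤ × ZMod c)) := by
  haveI : NeZero c := ⟨hc.ne'⟩
  constructor
  · intro g
    rw [← ker_eq_commutator, mem_ker_fC]
  · exact ⟨(QuotientGroup.quotientMulEquivOfEq (ker_eq_commutator c).symm).trans
      (QuotientGroup.quotientKerEquivOfSurjective (fC c) (fC_surj c))⟩
end
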